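/- Let X be a compact Hausdorff space that is ω-monolithic (the closure of every countable subset of X has a countable network) and has countable tightness (whenever x lies in the closure of a set A ⊆ X, there is a countable B ⊆ A with x in the closure of B). If the co-diagonal Δ^c_X = (X × X) \ Δ_X is almost discretely Lindelöf, then X is metrizable. -/

import Mathlib

open Set Topology Cardinal

universe u

/-- The co-diagonal of `X`: the complement of the diagonal in `X × X`. -/
def codiag (X : Type u) [TopologicalSpace X] : Set (X × X) := {p | p.1 ≠ p.2}

/-- A space is almost discretely Lindelöf if every discrete subset is contained
in a Lindelöf subset. -/
def AlmostDiscretelyLindelof (Z : Type u) [TopologicalSpace Z] : Prop :=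
  ∀ D : Set Z, DiscreteTopology D → ∃ L : Set Z, D ⊆ L ∧ IsLindelof L

/-- `X` has a countable network: a countable family of subsets such that every
open set is a union of members of the family. -/
def HasCountableNetwork (X : Type u) [TopologicalSpace X] : Prop :=
  ∃ 𝒩 : Set (Set X), 𝒩.Countable ∧ ∀ U : Set X, IsOpen U → ∃ 𝒩' ⊆ 𝒩, U = ⋃₀ 𝒩'

/-- A space has countable tightness if every point in the closure of a set lies
in the closure of a countable subset. -/
def CountableTightness (X : Type u) [TopologicalSpace X] : Prop :=
  ∀ (A : Set X) (x : X), x ∈ closure A →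
    ∃ B ⊆ A, B.Countable ∧ x ∈ closure B

set_option linter.unusedSectionVars false
set_option linter.unusedVariables false
set_option linter.unreachableTactic false
set_option linter.unusedTactic false
set_option linter.deprecated false
set_option maxHeartbeats 1000000

section AuxSep

variable {X : Type u} [TopologicalSpace X] [T2Space X] [CompactSpace X]


theorem sep_closed {C D : Set X} (hC : IsClosed C) (hD : IsClosed D)
    (hCD : Disjoint C D) :
    ∃ U V : Set X, IsOpen U ∧ IsOpen V ∧ C ⊆ U ∧ D ⊆ V ∧
      Disjoint (closure U) (closure V) := by
  obtain ⟨U₁, V₁, hU₁, hV₁, hCU₁, hDV₁, hUV₁⟩ := normal_separation hC hD hCD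
  have h1 : closure U₁ ⊆ V₁ᶜ :=
    closure_minimal (subset_compl_iff_disjoint_right.2 hUV₁) hV₁.isClosed_compl
  have h2 : Disjoint (closure U₁) D :=
    Set.disjoint_of_subset_left h1 (disjoint_compl_left.mono_right hDV₁)
  obtain ⟨U₂, V₂, hU₂, hV₂, hCU₂, hDV₂, hUV₂⟩ :=
    normal_separation isClosed_closure hD h2
  refine ⟨U₁, V₂, hU₁, hV₂, hCU₁, hDV₂, ?_⟩
  have h3 : closure V₂ ⊆ U₂ᶜ :=
    closure_minimal (subset_compl_iff_disjoint_left.2 hUV₂) hU₂.isClosed_compl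
  exact Set.disjoint_of_subset_right h3
    (disjoint_compl_right.mono_left hCU₂)

theorem sep_pts {u v : X} (huv : u ≠ v) :
    ∃ U V : Set X, IsOpen U ∧ IsOpen V ∧ u ∈ U ∧ v ∈ V ∧
      Disjoint (closure U) (closure V) := by
  obtain ⟨U, V, hU, hV, hu, hv, hd⟩ :=
    sep_closed (isClosed_singleton (x := u)) (isClosed_singleton (x := v))
      (disjoint_singleton.2 huv)
  exact ⟨U, V, hU, hV, hu rfl, hv rfl, hd⟩

/-- From a countable network on a closed subset `K`, we get a countable family of
open sets of `X` separating points of `K` with disjoint closures. -/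
theorem sep_family {K : Set X} (hnet : HasCountableNetwork ↥K) :
    ∃ 𝒮 : Set (Set X), 𝒮.Countable ∧ (∀ U ∈ 𝒮, IsOpen U) ∧
      ∀ u ∈ K, ∀ v ∈ K, u ≠ v →
        ∃ U ∈ 𝒮, ∃ V ∈ 𝒮, u ∈ U ∧ v ∈ V ∧ Disjoint (closure U) (closure V) := by
  obtain ⟨𝒩, h𝒩c, h𝒩⟩ := hnet
  classical
  -- choice of separating opens for each good pair
  have key : ∀ q : Set X × Set X, ∃ UV : Set X × Set X,
      IsOpen UV.1 ∧ IsOpen UV.2 ∧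
      (Disjoint (closure q.1) (closure q.2) →
        q.1 ⊆ UV.1 ∧ q.2 ⊆ UV.2 ∧ Disjoint (closure UV.1) (closure UV.2)) := by
    intro q
    by_cases hd : Disjoint (closure q.1) (closure q.2)
    · obtain ⟨U, V, hU, hV, h1, h2, h3⟩ := sep_closed isClosed_closure isClosed_closure hd
      exact ⟨(U, V), hU, hV, fun _ =>
        ⟨subset_closure.trans h1, subset_closure.trans h2, h3⟩⟩
    · exact ⟨(∅, ∅), isOpen_empty, isOpen_empty, fun h => absurd h hd⟩
  choose f hf1 hf2 hf3 using key
  set 𝒩X : Set (Set X) := (fun m => Subtype.val '' m) '' 𝒩 with h𝒩X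
  have h𝒩Xc : 𝒩X.Countable := h𝒩c.image _
  set P : Set (Set X × Set X) :=
    {q | q ∈ 𝒩X ×ˢ 𝒩X ∧ Disjoint (closure q.1) (closure q.2)} with hP
  have hPc : P.Countable := (h𝒩Xc.prod h𝒩Xc).mono fun q hq => hq.1
  refine ⟨(fun q => (f q).1) '' P ∪ (fun q => (f q).2) '' P,
    (hPc.image _).union (hPc.image _), ?_, ?_⟩
  · rintro U (⟨q, _, rfl⟩ | ⟨q, _, rfl⟩)
    exacts [hf1 q, hf2 q]
  · intro u hu v hv huv
    obtain ⟨A, B, hA, hB, huA, hvB, hAB⟩ := sep_pts huv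
    -- find network elements inside A, B
    have hfind : ∀ (W : Set X), IsOpen W → ∀ x ∈ K, x ∈ W →
        ∃ M ∈ 𝒩X, x ∈ M ∧ M ⊆ W := by
      intro W hW x hx hxW
      obtain ⟨𝒩', h𝒩'sub, h𝒩'⟩ := h𝒩 (Subtype.val ⁻¹' W) (hW.preimage continuous_subtype_val)
      have : (⟨x, hx⟩ : K) ∈ Subtype.val ⁻¹' W := hxW
      rw [h𝒩'] at this
      obtain ⟨m, hm, hxm⟩ := this
      refine ⟨Subtype.val '' m, ⟨m, h𝒩'sub hm, rfl⟩, ⟨⟨x, hx⟩, hxm, rfl⟩, ?_⟩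
      rintro _ ⟨y, hy, rfl⟩
      have : y ∈ Subtype.val ⁻¹' W := by
        rw [h𝒩']; exact ⟨m, hm, hy⟩
      exact this
    obtain ⟨M, hM, huM, hMA⟩ := hfind A hA u hu huA
    obtain ⟨N, hN, hvN, hNB⟩ := hfind B hB v hv hvB
    have hq : (M, N) ∈ P := by
      refine ⟨⟨hM, hN⟩, hAB.mono (closure_mono hMA) (closure_mono hNB)⟩
    obtain ⟨hMU, hNV, hUV⟩ := hf3 (M, N) hq.2
    exact ⟨(f (M, N)).1, Or.inl ⟨(M, N), hq, rfl⟩, (f (M, N)).2, Or.inr ⟨(M, N), hq, rfl⟩,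
      hMU huM, hNV hvN, hUV⟩

open TopologicalSpace in
theorem metrizable_of_sep_family {X : Type u} [t : TopologicalSpace X] [T2Space X]
    [CompactSpace X] (𝒮 : Set (Set X)) (hc : 𝒮.Countable) (hop : ∀ U ∈ 𝒮, IsOpen U)
    (hsep : ∀ u v : X, u ≠ v →
      ∃ U ∈ 𝒮, ∃ V ∈ 𝒮, u ∈ U ∧ v ∈ V ∧ Disjoint (closure U) (closure V)) :
    TopologicalSpace.MetrizableSpace X := by
  let t' : TopologicalSpace X := .generateFrom 𝒮
  have ht'le : t ≤ t' := le_generateFrom hop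
  have hcont : Continuous[t, t'] id := continuous_id_of_le ht'le
  have ht'2 : @T2Space X t' := by
    refine @T2Space.mk X t' fun x y hxy => ?_
    obtain ⟨U, hU, V, hV, hxU, hyV, hUV⟩ := hsep x y hxy
    exact ⟨U, V, .basic U hU, .basic V hV, hxU, hyV,
      hUV.mono (@subset_closure X t U) (@subset_closure X t V)⟩
  let e : @Homeomorph X X t t' :=
    @Continuous.homeoOfEquivCompactToT2 X X t t' _ ht'2 (Equiv.refl X) hcont
  have hb : @IsTopologicalBasis X t'
      ((fun f => ⋂₀ f) '' { f : Set (Set X) | f.Finite ∧ f ⊆ 𝒮 }) :=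
    isTopologicalBasis_of_subbasis rfl
  have hsc' : @SecondCountableTopology X t' :=
    @IsTopologicalBasis.secondCountableTopology X t' _ hb
      ((countable_setOf_finite_subset hc).image _)
  have hsc : @SecondCountableTopology X t :=
    @Topology.IsInducing.secondCountableTopology X X t _ t' hsc'
      (@Homeomorph.isInducing X X t t' e)
  exact @TopologicalSpace.metrizableSpace_of_t3_secondCountable X t _ hsc


end AuxSep

namespace ADLM

attribute [local instance] Classical.propDecidable

variable {X : Type u} [TopologicalSpace X] [T2Space X] [CompactSpace X]

noncomputable def wit (x₀ : X) (U : Set X) : X :=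
  if h : U.Nonempty then h.choose else x₀

theorem wit_mem (x₀ : X) {U : Set X} (h : U.Nonempty) : wit x₀ U ∈ U := by
  rw [wit, dif_pos h]; exact h.choose_spec

noncomputable def pickx (x₀ : X) (A : Set X) : X :=
  if h : ∃ p, p ∉ closure A then h.choose else x₀

noncomputable def pickz (x₀ : X) (𝒰 : Set (Set X)) (A : Set X) (x : X) : X :=
  if h : ∃ p, p ∈ closure A ∩ ⋂₀ {C | ∃ U ∈ 𝒰, x ∈ U ∧ C = closure U} then h.choose else x₀

noncomputable def pickNew (x z : X) (A : Set X) : Set (Set X) :=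
  (if h : ∃ UV : Set X × Set X, IsOpen UV.1 ∧ IsOpen UV.2 ∧ x ∈ UV.1 ∧ z ∈ UV.2 ∧
      Disjoint (closure UV.1) (closure UV.2) then {h.choose.1, h.choose.2} else ∅)
  ∪ (if h : ∃ 𝒮 : Set (Set X), 𝒮.Countable ∧ (∀ U ∈ 𝒮, IsOpen U) ∧
      ∀ u ∈ closure A, ∀ v ∈ closure A, u ≠ v → ∃ U ∈ 𝒮, ∃ V ∈ 𝒮, u ∈ U ∧ v ∈ V ∧
        Disjoint (closure U) (closure V) then h.choose else ∅)

def UfamOf (New : Ordinal.{u} → Set (Set X)) (α : Ordinal.{u}) : Set (Set X) :=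
  {S | ∃ s : Set (Set X), s.Finite ∧ s.Nonempty ∧
    (∀ u ∈ s, ∃ β, ∃ _ : β < α, u ∈ New β) ∧ S = ⋂₀ s}

noncomputable def AfamOf (x₀ : X) (xz : Ordinal.{u} → X × X)
    (New : Ordinal.{u} → Set (Set X)) (α : Ordinal.{u}) : Set X :=
  insert x₀ ({p | ∃ β, ∃ _ : β < α, p = (xz β).1 ∨ p = (xz β).2}
    ∪ wit x₀ '' {U | U ∈ UfamOf New α ∧ U.Nonempty})

noncomputable def step (x₀ : X) (α : Ordinal.{u}) : X × X × Set (Set X) :=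
  let NewP : Ordinal.{u} → Set (Set X) := fun β => if h : β < α then (step x₀ β).2.2 else ∅
  let xzP : Ordinal.{u} → X × X :=
    fun β => if h : β < α then ((step x₀ β).1, (step x₀ β).2.1) else (x₀, x₀)
  let A := AfamOf x₀ xzP NewP α
  let 𝒰 := UfamOf NewP α
  let x := pickx x₀ A
  let z := pickz x₀ 𝒰 A x
  (x, z, pickNew x z A)
termination_by α
decreasing_by all_goals assumption

noncomputable def xseq (x₀ : X) (α : Ordinal.{u}) : X := (step x₀ α).1
noncomputable def zseq (x₀ : X) (α : Ordinal.{u}) : X := (step x₀ α).2.1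
noncomputable def NewF (x₀ : X) (α : Ordinal.{u}) : Set (Set X) := (step x₀ α).2.2
noncomputable def Uf (x₀ : X) (α : Ordinal.{u}) : Set (Set X) := UfamOf (NewF x₀) α
noncomputable def Af (x₀ : X) (α : Ordinal.{u}) : Set X :=
  AfamOf x₀ (fun β => (xseq x₀ β, zseq x₀ β)) (NewF x₀) α

theorem UfamOf_congr {N N' : Ordinal.{u} → Set (Set X)} {α : Ordinal.{u}}
    (h : ∀ β, β < α → N β = N' β) : UfamOf N α = UfamOf N' α := by
  unfold UfamOf
  ext S
  constructor <;> rintro ⟨s, h1, h2, h3, rfl⟩ <;>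
    refine ⟨s, h1, h2, fun u hu => ?_, rfl⟩ <;>
    · obtain ⟨β, hβ, hm⟩ := h3 u hu
      refine ⟨β, hβ, ?_⟩
      first
        | (rw [← h β hβ]; exact hm)
        | (rw [h β hβ]; exact hm)
        | (rw [h β hβ] at hm; exact hm)
        | (rw [← h β hβ] at hm; exact hm)

theorem step_def (x₀ : X) (α : Ordinal.{u}) :
    step x₀ α = (pickx x₀ (Af x₀ α),
      pickz x₀ (Uf x₀ α) (Af x₀ α) (pickx x₀ (Af x₀ α)),
      pickNew (pickx x₀ (Af x₀ α))
        (pickz x₀ (Uf x₀ α) (Af x₀ α) (pickx x₀ (Af x₀ α))) (Af x₀ α)) := by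
  rw [step]
  have hN : ∀ β, β < α →
      (fun β => if _ : β < α then (step x₀ β).2.2 else ∅) β = NewF x₀ β := by
    intro β hβ; simp [dif_pos hβ, NewF]
  have hU : UfamOf (fun β => if _ : β < α then (step x₀ β).2.2 else ∅) α = Uf x₀ α :=
    UfamOf_congr hN
  have hA : AfamOf x₀ (fun β => if _ : β < α then ((step x₀ β).1, (step x₀ β).2.1) else (x₀, x₀))
      (fun β => if _ : β < α then (step x₀ β).2.2 else ∅) α = Af x₀ α := by
    unfold AfamOf
    rw [hU]
    congr 1
    ext p
    simp only [mem_union, mem_setOf_eq]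
    constructor <;> rintro (⟨β, hβ, hp⟩ | hp)
    · exact Or.inl ⟨β, hβ, by simpa [dif_pos hβ, xseq, zseq] using hp⟩
    · exact Or.inr hp
    · exact Or.inl ⟨β, hβ, by simpa [dif_pos hβ, xseq, zseq] using hp⟩
    · exact Or.inr hp
  simp only [hU, hA]

variable {x₀ : X}

theorem xseq_eq (α : Ordinal.{u}) : xseq x₀ α = pickx x₀ (Af x₀ α) := by
  rw [xseq, step_def]

theorem zseq_eq (α : Ordinal.{u}) :
    zseq x₀ α = pickz x₀ (Uf x₀ α) (Af x₀ α) (xseq x₀ α) := by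
  rw [zseq, step_def, xseq_eq]

theorem NewF_eq (α : Ordinal.{u}) :
    NewF x₀ α = pickNew (xseq x₀ α) (zseq x₀ α) (Af x₀ α) := by
  rw [NewF, step_def, xseq_eq, zseq_eq, xseq_eq]

-- monotonicity
theorem Uf_mono {β α : Ordinal.{u}} (h : β ≤ α) : Uf x₀ β ⊆ Uf x₀ α := by
  rintro S ⟨s, h1, h2, h3, rfl⟩
  exact ⟨s, h1, h2, fun u hu => by
    obtain ⟨γ, hγ, hm⟩ := h3 u hu; exact ⟨γ, lt_of_lt_of_le hγ h, hm⟩, rfl⟩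

theorem New_subset_Uf {β α : Ordinal.{u}} (h : β < α) : NewF x₀ β ⊆ Uf x₀ α := by
  intro U hU
  refine ⟨{U}, finite_singleton _, ⟨U, rfl⟩, ?_, (sInter_singleton U).symm⟩
  rintro u rfl
  exact ⟨β, h, hU⟩

theorem Uf_inter {α : Ordinal.{u}} {U V : Set X} (hU : U ∈ Uf x₀ α) (hV : V ∈ Uf x₀ α) :
    U ∩ V ∈ Uf x₀ α := by
  obtain ⟨s, h1, h2, h3, rfl⟩ := hU
  obtain ⟨t, g1, g2, g3, rfl⟩ := hV
  refine ⟨s ∪ t, h1.union g1, h2.mono subset_union_left, ?_, (sInter_union s t).symm⟩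
  rintro u (hu | hu)
  exacts [h3 u hu, g3 u hu]

theorem Af_mono {β α : Ordinal.{u}} (h : β ≤ α) : Af x₀ β ⊆ Af x₀ α := by
  unfold Af AfamOf
  apply insert_subset_insert
  apply union_subset_union
  · rintro p ⟨γ, hγ, hp⟩; exact ⟨γ, lt_of_lt_of_le hγ h, hp⟩
  · apply image_mono
    rintro U ⟨hU, hne⟩
    exact ⟨Uf_mono h hU, hne⟩

theorem x₀_mem_Af (α : Ordinal.{u}) : x₀ ∈ Af x₀ α := mem_insert _ _

theorem xseq_mem_Af {β α : Ordinal.{u}} (h : β < α) : xseq x₀ β ∈ Af x₀ α :=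
  mem_insert_iff.2 (Or.inr (Or.inl ⟨β, h, Or.inl rfl⟩))

theorem zseq_mem_Af {β α : Ordinal.{u}} (h : β < α) : zseq x₀ β ∈ Af x₀ α :=
  mem_insert_iff.2 (Or.inr (Or.inl ⟨β, h, Or.inr rfl⟩))

theorem wit_mem_Af {α : Ordinal.{u}} {U : Set X} (hU : U ∈ Uf x₀ α) (hne : U.Nonempty) :
    wit x₀ U ∈ Af x₀ α :=
  mem_insert_iff.2 (Or.inr (Or.inr ⟨U, ⟨hU, hne⟩, rfl⟩))

-- openness and countability of NewF
theorem New_open (α : Ordinal.{u}) : ∀ U ∈ NewF x₀ α, IsOpen U := by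
  rw [NewF_eq]
  rintro U (hU | hU)
  · by_cases h : ∃ UV : Set X × Set X, IsOpen UV.1 ∧ IsOpen UV.2 ∧ xseq x₀ α ∈ UV.1 ∧
        zseq x₀ α ∈ UV.2 ∧ Disjoint (closure UV.1) (closure UV.2)
    · rw [dif_pos h] at hU
      simp only [mem_insert_iff, mem_singleton_iff] at hU
      rcases hU with rfl | rfl
      exacts [h.choose_spec.1, h.choose_spec.2.1]
    · rw [dif_neg h] at hU; exact absurd hU (notMem_empty U)
  · by_cases h : ∃ 𝒮 : Set (Set X), 𝒮.Countable ∧ (∀ U ∈ 𝒮, IsOpen U) ∧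
        ∀ u ∈ closure (Af x₀ α), ∀ v ∈ closure (Af x₀ α), u ≠ v →
          ∃ U ∈ 𝒮, ∃ V ∈ 𝒮, u ∈ U ∧ v ∈ V ∧ Disjoint (closure U) (closure V)
    · rw [dif_pos h] at hU
      exact h.choose_spec.2.1 U hU
    · rw [dif_neg h] at hU; exact absurd hU (notMem_empty U)

theorem New_countable (α : Ordinal.{u}) : (NewF x₀ α).Countable := by
  rw [NewF_eq]
  apply Set.Countable.union
  · by_cases h : ∃ UV : Set X × Set X, IsOpen UV.1 ∧ IsOpen UV.2 ∧ xseq x₀ α ∈ UV.1 ∧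
        zseq x₀ α ∈ UV.2 ∧ Disjoint (closure UV.1) (closure UV.2)
    · rw [dif_pos h]; exact ((finite_singleton _).insert _).countable
    · rw [dif_neg h]; exact countable_empty
  · by_cases h : ∃ 𝒮 : Set (Set X), 𝒮.Countable ∧ (∀ U ∈ 𝒮, IsOpen U) ∧
        ∀ u ∈ closure (Af x₀ α), ∀ v ∈ closure (Af x₀ α), u ≠ v →
          ∃ U ∈ 𝒮, ∃ V ∈ 𝒮, u ∈ U ∧ v ∈ V ∧ Disjoint (closure U) (closure V)
    · rw [dif_pos h]; exact h.choose_spec.1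
    · rw [dif_neg h]; exact countable_empty

theorem Uf_open (α : Ordinal.{u}) : ∀ U ∈ Uf x₀ α, IsOpen U := by
  rintro U ⟨s, h1, h2, h3, rfl⟩
  exact h1.isOpen_sInter fun u hu => by
    obtain ⟨β, hβ, hm⟩ := h3 u hu
    exact New_open β u hm

-- countability of index sets below ω₁
theorem countable_Iio_ord {α : Ordinal.{u}} (h : α < (Cardinal.aleph 1).ord) :
    (Iio α).Countable := by
  rw [countable_iff_lt_aleph_one, Ordinal.mk_Iio_ordinal, lift_lt_aleph_one]
  exact Cardinal.lt_ord.1 h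

theorem Uf_countable {α : Ordinal.{u}} (h : α < (Cardinal.aleph 1).ord) :
    (Uf x₀ α).Countable := by
  have hT : (⋃ β ∈ Iio α, NewF x₀ β).Countable :=
    (countable_Iio_ord h).biUnion fun β _ => New_countable β
  have hsub : Uf x₀ α ⊆ (fun s : Set (Set X) => ⋂₀ s) ''
      {s | s.Finite ∧ s ⊆ ⋃ β ∈ Iio α, NewF x₀ β} := by
    rintro U ⟨s, h1, _, h3, rfl⟩
    refine ⟨s, ⟨h1, fun u hu => ?_⟩, rfl⟩
    obtain ⟨β, hβ, hm⟩ := h3 u hu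
    exact mem_biUnion hβ hm
  exact (((countable_setOf_finite_subset hT).image _).mono hsub)

theorem Af_countable {α : Ordinal.{u}} (h : α < (Cardinal.aleph 1).ord) :
    (Af x₀ α).Countable := by
  unfold Af AfamOf
  apply Set.Countable.insert
  apply Set.Countable.union
  · have : {p | ∃ β, ∃ _ : β < α, p = xseq x₀ β ∨ p = zseq x₀ β} ⊆
        (fun β => xseq x₀ β) '' Iio α ∪ (fun β => zseq x₀ β) '' Iio α := by
      rintro p ⟨β, hβ, (rfl | rfl)⟩
      exacts [Or.inl ⟨β, hβ, rfl⟩, Or.inr ⟨β, hβ, rfl⟩]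
    exact (((countable_Iio_ord h).image _).union ((countable_Iio_ord h).image _)).mono this
  · exact ((Uf_countable h).mono (sep_subset _ _)).image _

-- the z point
theorem zseq_spec (α : Ordinal.{u}) :
    zseq x₀ α ∈ closure (Af x₀ α) ∧
      ∀ U ∈ Uf x₀ α, xseq x₀ α ∈ U → zseq x₀ α ∈ closure U := by
  have hex : ∃ p, p ∈ closure (Af x₀ α) ∩
      ⋂₀ {C | ∃ U ∈ Uf x₀ α, xseq x₀ α ∈ U ∧ C = closure U} := by
    set x := xseq x₀ α
    let ι := {U : Set X // (U ∈ Uf x₀ α ∧ x ∈ U) ∨ U = Set.univ}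
    haveI : Nonempty ι := ⟨⟨Set.univ, Or.inr rfl⟩⟩
    let Z : ι → Set X := fun U => closure (Af x₀ α) ∩ closure U.1
    have hZne : ∀ i, (Z i).Nonempty := by
      rintro ⟨U, (⟨hU, hxU⟩ | rfl)⟩
      · have hUne : U.Nonempty := ⟨x, hxU⟩
        exact ⟨wit x₀ U, subset_closure (wit_mem_Af hU hUne),
          subset_closure (wit_mem x₀ hUne)⟩
      · exact ⟨x₀, subset_closure (x₀_mem_Af α), subset_closure (Set.mem_univ x₀)⟩
    have hZd : Directed (· ⊇ ·) Z := by
      rintro ⟨U, hU⟩ ⟨V, hV⟩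
      rcases hU with hU | rfl
      · rcases hV with hV | rfl
        · refine ⟨⟨U ∩ V, Or.inl ⟨Uf_inter hU.1 hV.1, hU.2, hV.2⟩⟩, ?_, ?_⟩
          · exact inter_subset_inter_right _ (closure_mono inter_subset_left)
          · exact inter_subset_inter_right _ (closure_mono inter_subset_right)
        · exact ⟨⟨U, Or.inl hU⟩, subset_rfl, inter_subset_inter_right _ (closure_mono (subset_univ U))⟩
      · exact ⟨⟨V, hV⟩, inter_subset_inter_right _ (closure_mono (subset_univ V)), subset_rfl⟩
    obtain ⟨z, hz⟩ := IsCompact.nonempty_iInter_of_directed_nonempty_isCompact_isClosed Z hZd hZne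
      (fun i => (isClosed_closure.inter isClosed_closure).isCompact)
      (fun i => isClosed_closure.inter isClosed_closure)
    rw [mem_iInter] at hz
    refine ⟨z, (hz ⟨Set.univ, Or.inr rfl⟩).1, ?_⟩
    rintro C ⟨U, hU, hxU, rfl⟩
    exact (hz ⟨U, Or.inl ⟨hU, hxU⟩⟩).2
  rw [zseq_eq, pickz, dif_pos hex]
  obtain ⟨h1, h2⟩ := hex.choose_spec
  refine ⟨h1, fun U hU hxU => ?_⟩
  exact h2 (closure U) ⟨U, hU, hxU, rfl⟩


theorem xseq_spec (hns : ∀ A : Set X, A.Countable → closure A ≠ Set.univ)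
    {α : Ordinal.{u}} (h : α < (Cardinal.aleph 1).ord) :
    xseq x₀ α ∉ closure (Af x₀ α) := by
  have hex : ∃ p, p ∉ closure (Af x₀ α) := by
    rw [← Set.ne_univ_iff_exists_notMem]
    exact hns _ (Af_countable h)
  rw [xseq_eq, pickx, dif_pos hex]
  exact hex.choose_spec

theorem xz_ne (hns : ∀ A : Set X, A.Countable → closure A ≠ Set.univ)
    {α : Ordinal.{u}} (h : α < (Cardinal.aleph 1).ord) :
    xseq x₀ α ≠ zseq x₀ α := by
  intro he
  exact xseq_spec hns h (he ▸ (zseq_spec α).1)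

theorem sepP (hns : ∀ A : Set X, A.Countable → closure A ≠ Set.univ)
    {α : Ordinal.{u}} (h : α < (Cardinal.aleph 1).ord) :
    ∃ U V : Set X, U ∈ NewF x₀ α ∧ V ∈ NewF x₀ α ∧ xseq x₀ α ∈ U ∧ zseq x₀ α ∈ V ∧
      Disjoint (closure U) (closure V) := by
  have hex : ∃ UV : Set X × Set X, IsOpen UV.1 ∧ IsOpen UV.2 ∧ xseq x₀ α ∈ UV.1 ∧
      zseq x₀ α ∈ UV.2 ∧ Disjoint (closure UV.1) (closure UV.2) := by
    obtain ⟨U, V, hU, hV, hx, hz, hd⟩ := sep_pts (xz_ne hns h)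
    exact ⟨(U, V), hU, hV, hx, hz, hd⟩
  refine ⟨hex.choose.1, hex.choose.2, ?_, ?_, hex.choose_spec.2.2.1,
    hex.choose_spec.2.2.2.1, hex.choose_spec.2.2.2.2⟩ <;>
  · rw [NewF_eq]
    refine Or.inl ?_
    rw [dif_pos hex]
    simp

theorem sepF (hmono : ∀ A : Set X, A.Countable → HasCountableNetwork ↥(closure A))
    {α : Ordinal.{u}} (h : α < (Cardinal.aleph 1).ord) :
    ∀ u ∈ closure (Af x₀ α), ∀ v ∈ closure (Af x₀ α), u ≠ v →
      ∃ U ∈ NewF x₀ α, ∃ V ∈ NewF x₀ α, u ∈ U ∧ v ∈ V ∧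
        Disjoint (closure U) (closure V) := by
  have hex : ∃ 𝒮 : Set (Set X), 𝒮.Countable ∧ (∀ U ∈ 𝒮, IsOpen U) ∧
      ∀ u ∈ closure (Af x₀ α), ∀ v ∈ closure (Af x₀ α), u ≠ v →
        ∃ U ∈ 𝒮, ∃ V ∈ 𝒮, u ∈ U ∧ v ∈ V ∧ Disjoint (closure U) (closure V) :=
    sep_family (hmono _ (Af_countable h))
  intro u hu v hv huv
  obtain ⟨U, hU, V, hV, h1, h2, h3⟩ := hex.choose_spec.2.2 u hu v hv huv
  have hsub : hex.choose ⊆ NewF x₀ α := by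
    rw [NewF_eq]
    intro W hW
    exact Or.inr (by rw [dif_pos hex]; exact hW)
  exact ⟨U, hsub hU, V, hsub hV, h1, h2, h3⟩

theorem follow {β α : Ordinal.{u}} (hβα : β < α) :
    ∀ U ∈ NewF x₀ β, xseq x₀ α ∈ U → zseq x₀ α ∈ closure U := by
  intro U hU hx
  exact (zseq_spec α).2 U (New_subset_Uf hβα hU) hx

theorem xseq_inj (hns : ∀ A : Set X, A.Countable → closure A ≠ Set.univ)
    {β α : Ordinal.{u}} (hβα : β < α) (h : α < (Cardinal.aleph 1).ord) :
    xseq x₀ β ≠ xseq x₀ α := by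
  intro he
  exact xseq_spec hns h (he ▸ subset_closure (xseq_mem_Af hβα))

end ADLM


/-- An ω-monolithic compact Hausdorff space of countable tightness whose
co-diagonal is almost discretely Lindelöf is metrizable. -/
theorem monolithic_compact_codiag_almostDiscretelyLindelof_metrizable
    (X : Type u) [TopologicalSpace X] [T2Space X] [CompactSpace X]
    (hmono : ∀ A : Set X, A.Countable → HasCountableNetwork ↥(closure A))
    (ht : CountableTightness X)
    (h : AlmostDiscretelyLindelof ↥(codiag X)) :
    TopologicalSpace.MetrizableSpace X := by
  classical
  by_cases hsep : ∃ A : Set X, A.Countable ∧ closure A = Set.univ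
  · obtain ⟨A, hAc, hAd⟩ := hsep
    obtain ⟨𝒮, h1, h2, h3⟩ := sep_family (hmono A hAc)
    exact metrizable_of_sep_family 𝒮 h1 h2 fun u v huv =>
      h3 u (by rw [hAd]; exact Set.mem_univ _) v (by rw [hAd]; exact Set.mem_univ _) huv
  · exfalso
    push_neg at hsep
    have hns : ∀ A : Set X, A.Countable → closure A ≠ Set.univ := fun A hA => hsep A hA
    have hne : Nonempty X := by
      by_contra hX
      refine hns ∅ countable_empty ?_
      rw [closure_empty]
      exact (Set.univ_eq_empty_iff.2 (not_nonempty_iff.1 hX)).symm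
    obtain ⟨x₀⟩ := hne
    set Ω : Ordinal.{u} := (Cardinal.aleph 1).ord with hΩdef
    have hΩlim : Order.IsSuccLimit Ω := Cardinal.isSuccLimit_ord Cardinal.aleph0_lt_aleph_one.le
    set x : Ordinal.{u} → X := ADLM.xseq x₀ with hxdef
    set z : Ordinal.{u} → X := ADLM.zseq x₀ with hzdef
    set D : Set (X × X) := {p | ∃ α, ∃ _ : α < Ω, p = (x α, z α)} with hDdef
    have hDcod : D ⊆ codiag X := by
      rintro p ⟨α, hα, rfl⟩
      exact ADLM.xz_ne (x₀ := x₀) hns hα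
    set D' : Set ↥(codiag X) := Subtype.val ⁻¹' D with hD'def
    -- discreteness
    have hdisc : DiscreteTopology ↥D' := by
      refine discreteTopology_iff_isOpen_singleton.mpr fun a => ?_
      obtain ⟨α, hα, hpa⟩ := a.2
      obtain ⟨U, V, hU, hV, hxU, hzV, hd⟩ := ADLM.sepP (x₀ := x₀) hns hα
      let O : Set (X × X) := ((closure (ADLM.Af x₀ α))ᶜ ∩ U) ×ˢ V
      have hOopen : IsOpen O :=
        ((isClosed_closure.isOpen_compl).inter (ADLM.New_open (x₀ := x₀) α U hU)).prod
          (ADLM.New_open (x₀ := x₀) α V hV)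
      have hkey : {a} = (fun b : ↥D' => (b.1.1 : X × X)) ⁻¹' O := by
        ext b
        simp only [mem_singleton_iff, mem_preimage]
        constructor
        · rintro rfl
          rw [hpa]
          exact ⟨⟨ADLM.xseq_spec (x₀ := x₀) hns hα, hxU⟩, hzV⟩
        · intro hb
          obtain ⟨β, hβ, hpb⟩ := b.2
          rw [hpb] at hb
          obtain ⟨⟨hb1, hb2⟩, hb3⟩ := hb
          rcases lt_trichotomy β α with hlt | rfl | hgt
          · exact absurd (subset_closure (ADLM.xseq_mem_Af (x₀ := x₀) hlt)) hb1
          · exact Subtype.ext (Subtype.ext (hpb.trans hpa.symm))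
          · exfalso
            have hzcl : z β ∈ closure U := ADLM.follow (x₀ := x₀) hgt U hU hb2
            exact Set.disjoint_left.1 hd hzcl (subset_closure hb3)
      rw [hkey]
      exact hOopen.preimage (continuous_subtype_val.comp continuous_subtype_val)
    obtain ⟨L, hDL, hLlin⟩ := h D' hdisc
    -- sigma-compact cover of L inside codiag
    have hWex : ∀ p : ↥(codiag X), ∃ W : Set (X × X), IsOpen W ∧ (p : X × X) ∈ W ∧
        closure W ⊆ codiag X := by
      intro p
      have hd : Disjoint {(p : X × X)} (Set.diagonal X) := by
        rw [Set.disjoint_singleton_left]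
        exact p.2
      obtain ⟨W, V, hW, hV, hpW, hdV, hdisj⟩ :=
        sep_closed isClosed_singleton isClosed_diagonal hd
      refine ⟨W, hW, hpW rfl, ?_⟩
      intro q hq
      by_contra hqc
      have hqdiag : q ∈ Set.diagonal X := not_not.1 hqc
      exact Set.disjoint_left.1 hdisj hq (subset_closure (hdV hqdiag))
    choose W hWopen hWmem hWsub using hWex
    have hcov : L ⊆ ⋃ p : ↥(codiag X), (Subtype.val ⁻¹' W p : Set ↥(codiag X)) :=
      fun q _ => mem_iUnion.2 ⟨q, hWmem q⟩
    obtain ⟨r, hrc, hrcov⟩ := hLlin.elim_countable_subcover _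
      (fun p => (hWopen p).preimage continuous_subtype_val) hcov
    have hDcover : D ⊆ ⋃ p ∈ r, closure (W p) := by
      intro d hd
      have hdc : d ∈ codiag X := hDcod hd
      have hdL : (⟨d, hdc⟩ : ↥(codiag X)) ∈ L := hDL hd
      obtain ⟨p, hp, hm⟩ := mem_iUnion₂.1 (hrcov hdL)
      exact mem_biUnion hp (subset_closure hm)
    -- D is uncountable
    have hDunc : ¬ D.Countable := by
      intro hc
      have hIio : (Iio Ω).Countable := by
        haveI : Countable ↥D := hc.to_subtype
        let F : ↥(Iio Ω) → ↥D := fun α => ⟨(x α.1, z α.1), ⟨α.1, α.2, rfl⟩⟩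
        have hFinj : Function.Injective F := by
          rintro ⟨α, hα⟩ ⟨β, hβ⟩ he
          have : (x α, z α).1 = (x β, z β).1 := congrArg (fun w : ↥D => (w : X × X).1) he
          rcases lt_trichotomy α β with hlt | heq | hgt
          · exact absurd this (ADLM.xseq_inj (x₀ := x₀) hns hlt hβ)
          · exact Subtype.ext heq
          · exact absurd this.symm (ADLM.xseq_inj (x₀ := x₀) hns hgt hα)
        haveI := hFinj.countable
        exact countable_coe_iff.1 inferInstance
      rw [countable_iff_lt_aleph_one, Ordinal.mk_Iio_ordinal, lift_lt_aleph_one,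
        Cardinal.card_ord] at hIio
      exact lt_irrefl _ hIio
    -- pick a compact piece with uncountable trace
    have hEx : ∃ p ∈ r, ¬ (D ∩ closure (W p)).Countable := by
      by_contra hall
      push_neg at hall
      refine hDunc ((hrc.biUnion hall).mono ?_)
      intro d hd
      obtain ⟨p, hp, hm⟩ := mem_iUnion₂.1 (hDcover hd)
      exact mem_biUnion hp ⟨hd, hm⟩
    obtain ⟨p₀, _, hSunc⟩ := hEx
    set K : Set (X × X) := closure (W p₀) with hKdef
    have hKcomp : IsCompact K := isClosed_closure.isCompact
    have hKcod : K ⊆ codiag X := hWsub p₀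
    set S : Set (X × X) := D ∩ K with hSdef
    -- accumulation point
    have hacc : ∃ q ∈ K, ∀ O : Set (X × X), IsOpen O → q ∈ O → ¬ (S ∩ O).Countable := by
      by_contra hno
      push_neg at hno
      choose O hO1 hO2 hO3 using hno
      obtain ⟨t, htcov⟩ := hKcomp.elim_finite_subcover (fun q : ↥K => O q.1 q.2)
        (fun q => hO1 q.1 q.2) (fun y hy => mem_iUnion.2 ⟨⟨y, hy⟩, hO2 y hy⟩)
      refine hSunc ?_
      have hsub : S ⊆ ⋃ q ∈ t, (S ∩ O q.1 q.2) := by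
        intro s hs
        obtain ⟨q, hq, hm⟩ := mem_iUnion₂.1 (htcov hs.2)
        exact mem_biUnion hq ⟨hs, hm⟩
      exact ((t.countable_toSet.biUnion fun q _ => hO3 q.1 q.2).mono hsub)
    obtain ⟨q, hqK, hq⟩ := hacc
    -- helper: large indices in any neighborhood
    have hbig : ∀ O : Set (X × X), IsOpen O → q ∈ O → ∀ μ, μ < Ω →
        ∃ α, μ < α ∧ α < Ω ∧ (x α, z α) ∈ S ∩ O := by
      intro O hO hqO μ hμ
      have hμs : Order.succ μ < Ω := hΩlim.succ_lt hμ
      have hcnt : ((fun α : Ordinal.{u} => ((x α, z α) : X × X)) ''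
          (Iio (Order.succ μ))).Countable :=
        (ADLM.countable_Iio_ord hμs).image _
      have hns' : ¬ (S ∩ O ⊆ (fun α : Ordinal.{u} => ((x α, z α) : X × X)) ''
          (Iio (Order.succ μ))) := fun hsub => hq O hO hqO (hcnt.mono hsub)
      obtain ⟨w, hwSO, hwim⟩ := not_subset.1 hns'
      obtain ⟨α, hα, hweq⟩ := hwSO.1.1
      refine ⟨α, ?_, hα, hweq ▸ hwSO⟩
      by_contra hle
      push_neg at hle
      exact hwim ⟨α, Order.lt_succ_iff.2 hle, hweq.symm⟩
    -- first coordinate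
    have hc1 : ∃ μ, μ < Ω ∧ q.1 ∈ closure (ADLM.Af x₀ μ) := by
      set T1 : Set X := {y | ∃ α, ∃ _ : α < Ω, (x α, z α) ∈ S ∧ y = x α} with hT1
      have hq1 : q.1 ∈ closure T1 := by
        rw [mem_closure_iff]
        intro O' hO' hqO'
        obtain ⟨α, hμα, hα, hmem⟩ := hbig (O' ×ˢ (Set.univ : Set X))
          (hO'.prod isOpen_univ) (Set.mem_prod.mpr ⟨hqO', Set.mem_univ _⟩) 0 hΩlim.pos
        exact ⟨x α, hmem.2.1, ⟨α, hα, hmem.1, rfl⟩⟩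
      obtain ⟨B, hBsub, hBc, hBcl⟩ := ht T1 q.1 hq1
      haveI := hBc.to_subtype
      have hBidx : ∀ y : ↥B, ∃ α, ∃ _ : α < Ω, y.1 = x α := by
        rintro ⟨y, hy⟩
        obtain ⟨α, hα, _, he⟩ := hBsub hy
        exact ⟨α, hα, he⟩
      choose ι hι hιeq using hBidx
      have hbd : (⨆ y : ↥B, Order.succ (ι y)) < Ω := by
        refine Ordinal.iSup_lt_ord ?_ fun y => hΩlim.succ_lt (hι y)
        rw [hΩdef, Cardinal.isRegular_aleph_one.cof_eq]
        exact lt_of_le_of_lt Cardinal.mk_le_aleph0 Cardinal.aleph0_lt_aleph_one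
      refine ⟨_, hbd, ?_⟩
      have hBA : B ⊆ ADLM.Af x₀ (⨆ y : ↥B, Order.succ (ι y)) := by
        intro y hy
        have h1 : ι ⟨y, hy⟩ < ⨆ y : ↥B, Order.succ (ι y) :=
          lt_of_lt_of_le (Order.lt_succ _) (Ordinal.le_iSup (fun w : ↥B => Order.succ (ι w)) ⟨y, hy⟩)
        have he : y = x (ι ⟨y, hy⟩) := hιeq ⟨y, hy⟩
        rw [he]
        exact ADLM.xseq_mem_Af (x₀ := x₀) h1
      exact closure_mono hBA hBcl
    have hc2 : ∃ μ, μ < Ω ∧ q.2 ∈ closure (ADLM.Af x₀ μ) := by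
      set T2 : Set X := {y | ∃ α, ∃ _ : α < Ω, (x α, z α) ∈ S ∧ y = z α} with hT2
      have hq2 : q.2 ∈ closure T2 := by
        rw [mem_closure_iff]
        intro O' hO' hqO'
        obtain ⟨α, hμα, hα, hmem⟩ := hbig ((Set.univ : Set X) ×ˢ O')
          (isOpen_univ.prod hO') (Set.mem_prod.mpr ⟨Set.mem_univ _, hqO'⟩) 0 hΩlim.pos
        exact ⟨z α, hmem.2.2, ⟨α, hα, hmem.1, rfl⟩⟩
      obtain ⟨B, hBsub, hBc, hBcl⟩ := ht T2 q.2 hq2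
      haveI := hBc.to_subtype
      have hBidx : ∀ y : ↥B, ∃ α, ∃ _ : α < Ω, y.1 = z α := by
        rintro ⟨y, hy⟩
        obtain ⟨α, hα, _, he⟩ := hBsub hy
        exact ⟨α, hα, he⟩
      choose ι hι hιeq using hBidx
      have hbd : (⨆ y : ↥B, Order.succ (ι y)) < Ω := by
        refine Ordinal.iSup_lt_ord ?_ fun y => hΩlim.succ_lt (hι y)
        rw [hΩdef, Cardinal.isRegular_aleph_one.cof_eq]
        exact lt_of_le_of_lt Cardinal.mk_le_aleph0 Cardinal.aleph0_lt_aleph_one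
      refine ⟨_, hbd, ?_⟩
      have hBA : B ⊆ ADLM.Af x₀ (⨆ y : ↥B, Order.succ (ι y)) := by
        intro y hy
        have h1 : ι ⟨y, hy⟩ < ⨆ y : ↥B, Order.succ (ι y) :=
          lt_of_lt_of_le (Order.lt_succ _) (Ordinal.le_iSup (fun w : ↥B => Order.succ (ι w)) ⟨y, hy⟩)
        have he : y = z (ι ⟨y, hy⟩) := hιeq ⟨y, hy⟩
        rw [he]
        exact ADLM.zseq_mem_Af (x₀ := x₀) h1
      exact closure_mono hBA hBcl
    obtain ⟨μ₁, hμ₁, hqc1⟩ := hc1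
    obtain ⟨μ₂, hμ₂, hqc2⟩ := hc2
    set μ := max μ₁ μ₂ with hμdef
    have hμΩ : μ < Ω := max_lt hμ₁ hμ₂
    have hqc1' : q.1 ∈ closure (ADLM.Af x₀ μ) :=
      closure_mono (ADLM.Af_mono (x₀ := x₀) (le_max_left _ _)) hqc1
    have hqc2' : q.2 ∈ closure (ADLM.Af x₀ μ) :=
      closure_mono (ADLM.Af_mono (x₀ := x₀) (le_max_right _ _)) hqc2
    have hne12 : q.1 ≠ q.2 := hKcod hqK
    obtain ⟨U, hU, V, hV, hq1U, hq2V, hdUV⟩ :=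
      ADLM.sepF (x₀ := x₀) hmono hμΩ q.1 hqc1' q.2 hqc2' hne12
    obtain ⟨α, hμα, hαΩ, hmem⟩ := hbig (U ×ˢ V)
      ((ADLM.New_open (x₀ := x₀) μ U hU).prod (ADLM.New_open (x₀ := x₀) μ V hV))
      ⟨hq1U, hq2V⟩ μ hμΩ
    have hxU : x α ∈ U := hmem.2.1
    have hzV : z α ∈ V := hmem.2.2
    have hzclU : z α ∈ closure U := ADLM.follow (x₀ := x₀) hμα U hU hxU
    exact Set.disjoint_left.1 hdUV hzclU (subset_closure hzV)
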